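/- For all M > 0 and all complex a, b with positive real parts, 4 ∂_a ∂_b ∫_0^∞ exp(−(t/2) M a − (M/(2t)) b) dt/(2t) = M² ∫_0^∞ exp(−(t/2) M a − (M/(2t)) b) dt/(2t), where differentiation under the integral sign is justified by absolute convergence. -/

import Mathlib

open MeasureTheory Complex

lemma bessel_norm_exp_aux (M t : ℝ) (ht : 0 < t) (a' b' : ℂ) :
    ‖Complex.exp (-((t:ℂ)/2) * M * a' - ((M:ℂ)/(2*(t:ℂ))) * b')‖
      = Real.exp (-(t/2*M*a'.re) - M/(2*t)*b'.re) := by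
  rw [Complex.norm_exp]
  congr 1
  have h1 : -((t:ℂ)/2) * M * a' - ((M:ℂ)/(2*(t:ℂ))) * b'
      = ((-(t/2*M):ℝ):ℂ) * a' + ((-(M/(2*t)):ℝ):ℂ) * b' := by
    push_cast; ring
  rw [h1, Complex.add_re, Complex.re_ofReal_mul, Complex.re_ofReal_mul]; ring

lemma bessel_integrable_dom (α β : ℝ) (hα : 0 < α) (hβ : 0 < β) (n : ℕ) :
    IntegrableOn (fun t : ℝ => Real.exp (-(α * t) - β / t) / t ^ n) (Set.Ioi 0) := by
  have hmeas : AEStronglyMeasurable (fun t : ℝ => Real.exp (-(α * t) - β / t) / t ^ n)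
      (volume.restrict (Set.Ioi (0:ℝ))) := by
    apply ContinuousOn.aestronglyMeasurable _ measurableSet_Ioi
    apply ContinuousOn.div
    · apply Real.continuous_exp.comp_continuousOn
      exact ((continuous_const.mul continuous_id).continuousOn.neg).sub
        (continuousOn_const.div continuousOn_id (fun t ht => ne_of_gt ht))
    · exact (continuous_pow n).continuousOn
    · intro t ht; exact pow_ne_zero n (ne_of_gt ht)
  apply Integrable.mono
    (((exp_neg_integrableOn_Ioi 0 hα)).const_mul ((n.factorial : ℝ) / β ^ n)) hmeas
  filter_upwards [ae_restrict_mem measurableSet_Ioi] with t ht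
  have ht' : (0:ℝ) < t := ht
  have hx : (0:ℝ) < β / t := div_pos hβ ht'
  have key : (β/t)^n * Real.exp (-(β/t)) ≤ (n.factorial : ℝ) := by
    have h2 : (β/t)^n ≤ (n.factorial : ℝ) * Real.exp (β/t) := by
      have h := Real.pow_div_factorial_le_exp (β/t) hx.le n
      rw [div_le_iff₀ (by positivity)] at h
      linarith [h]
    rw [Real.exp_neg, ← div_eq_mul_inv, div_le_iff₀ (Real.exp_pos _)]
    linarith [h2]
  have h3 : Real.exp (-(β/t)) / t^n ≤ (n.factorial : ℝ) / β^n := by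
    rw [div_le_div_iff₀ (by positivity) (by positivity)]
    calc Real.exp (-(β/t)) * β^n = ((β/t)^n * Real.exp (-(β/t))) * t^n := by
          rw [div_pow]; field_simp
      _ ≤ (n.factorial : ℝ) * t^n := by
          apply mul_le_mul_of_nonneg_right key (by positivity)
  rw [Real.norm_eq_abs, Real.norm_eq_abs, _root_.abs_of_nonneg (by positivity),
    _root_.abs_of_nonneg (by positivity), sub_eq_add_neg, Real.exp_add]
  calc Real.exp (-(α*t)) * Real.exp (-(β/t)) / t^n
      = (Real.exp (-(β/t)) / t^n) * Real.exp (-(α*t)) := by ring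
    _ ≤ (n.factorial : ℝ) / β^n * Real.exp (-(α*t)) :=
        mul_le_mul_of_nonneg_right h3 (Real.exp_pos _).le
    _ = (n.factorial : ℝ) / β^n * Real.exp (-α*t) := by ring_nf

lemma bessel_contOn_exp (M : ℝ) (a' b' : ℂ) :
    ContinuousOn (fun t : ℝ => Complex.exp (-((t:ℂ)/2) * M * a' - ((M:ℂ)/(2*(t:ℂ))) * b'))
      (Set.Ioi (0:ℝ)) := by
  apply ContinuousOn.cexp
  apply ContinuousOn.sub
  · exact (((Complex.continuous_ofReal.div_const 2).neg.mul continuous_const).mul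
      continuous_const).continuousOn
  · refine ContinuousOn.mul ?_ continuousOn_const
    refine continuousOn_const.div
      ((continuous_const.mul Complex.continuous_ofReal).continuousOn) (fun t ht => ?_)
    exact mul_ne_zero two_ne_zero (Complex.ofReal_ne_zero.2 (ne_of_gt ht))

lemma bessel_den_contOn : ContinuousOn (fun t : ℝ => (2*(t:ℂ))) (Set.Ioi (0:ℝ)) :=
  (continuous_const.mul Complex.continuous_ofReal).continuousOn

lemma bessel_den_ne (t : ℝ) (ht : t ∈ Set.Ioi (0:ℝ)) : (2*(t:ℂ)) ≠ 0 :=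
  mul_ne_zero two_ne_zero (Complex.ofReal_ne_zero.2 (ne_of_gt ht))

theorem bessel_integral_deriv (M : ℝ) (hM : 0 < M) (a b : ℂ)
    (ha : 0 < a.re) (hb : 0 < b.re)
    (F : ℂ → ℂ → ℂ)
    (hF : ∀ a' b' : ℂ, F a' b' = ∫ t in Set.Ioi (0:ℝ),
      Complex.exp (-((t:ℂ)/2) * M * a' - ((M:ℂ)/(2*(t:ℂ))) * b') / (2*(t:ℂ))) :
    4 * deriv (fun a' => deriv (fun b' => F a' b') b) a = M ^ 2 * F a b := by
  -- the inner derivative, for any a' with positive real part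
  set G : ℂ → ℂ := fun a' => ∫ t in Set.Ioi (0:ℝ),
    Complex.exp (-((t:ℂ)/2) * M * a' - ((M:ℂ)/(2*(t:ℂ))) * b) *
      (-((M:ℂ)/(2*(t:ℂ)))) / (2*(t:ℂ)) with hG
  have key1 : ∀ a' : ℂ, 0 < a'.re → HasDerivAt (fun b' => F a' b') (G a') b := by
    intro a' ha'
    have := hasDerivAt_integral_of_dominated_loc_of_deriv_le
      (μ := volume.restrict (Set.Ioi (0:ℝ))) (x₀ := b)
      (F := fun b' t => Complex.exp (-((t:ℂ)/2) * M * a' - ((M:ℂ)/(2*(t:ℂ))) * b') / (2*(t:ℂ)))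
      (F' := fun b' t => Complex.exp (-((t:ℂ)/2) * M * a' - ((M:ℂ)/(2*(t:ℂ))) * b') *
        (-((M:ℂ)/(2*(t:ℂ)))) / (2*(t:ℂ)))
      (bound := fun t => M/4 * (Real.exp (-((M*a'.re/2) * t) - (M*b.re/4) / t) / t^2))
      (Metric.ball_mem_nhds b (show (0:ℝ) < b.re/2 by linarith))
      ?_ ?_ ?_ ?_ ?_ ?_
    · simp only [hF]
      exact this.2
    · exact Filter.Eventually.of_forall fun b'' =>
        ((bessel_contOn_exp M a' b'').div bessel_den_contOn bessel_den_ne).aestronglyMeasurable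
          measurableSet_Ioi
    · -- integrability of the base integrand
      apply Integrable.mono ((bessel_integrable_dom (M*a'.re/2) (M*b.re/2)
        (by positivity) (by positivity) 1).const_mul (1/2))
        (((bessel_contOn_exp M a' b).div bessel_den_contOn bessel_den_ne).aestronglyMeasurable
          measurableSet_Ioi)
      filter_upwards [ae_restrict_mem measurableSet_Ioi] with t ht
      have ht' : (0:ℝ) < t := ht
      simp only [Pi.div_apply, Pi.mul_apply]
      rw [norm_div, bessel_norm_exp_aux M t ht' a' b]
      have hden : ‖(2*(t:ℂ))‖ = 2*t := by
        rw [norm_mul, Complex.norm_two, Complex.norm_real, Real.norm_eq_abs, abs_of_pos ht']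
      rw [hden, Real.norm_eq_abs, _root_.abs_of_nonneg (by positivity)]
      have : -(t/2*M*a'.re) - M/(2*t)*b.re = -(M*a'.re/2*t) - M*b.re/2/t := by ring
      rw [this]
      rw [div_le_iff₀ (by positivity)]
      calc Real.exp (-(M*a'.re/2*t) - M*b.re/2/t)
          = Real.exp (-(M*a'.re/2*t) - M*b.re/2/t) / t * t := by field_simp
        _ ≤ 1/2 * (Real.exp (-(M*a'.re/2*t) - M*b.re/2/t) / t ^ 1) * (2*t) := by
            rw [pow_one]; ring_nf; rfl
    · exact (((bessel_contOn_exp M a' b).mul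
        ((continuousOn_const.div bessel_den_contOn bessel_den_ne).neg)).div
          bessel_den_contOn bessel_den_ne).aestronglyMeasurable measurableSet_Ioi
    · -- bound on the derivative in a ball around b
      filter_upwards [ae_restrict_mem measurableSet_Ioi] with t ht
      intro x hx
      have ht' : (0:ℝ) < t := ht
      have hxre : b.re/2 ≤ x.re := by
        have h1 : |x.re - b.re| ≤ ‖x - b‖ := by
          simpa using Complex.abs_re_le_norm (x - b)
        have h2 : ‖x - b‖ < b.re/2 := by
          simpa [Complex.dist_eq] using (Metric.mem_ball.mp hx)
        have := abs_lt.mp (lt_of_le_of_lt h1 h2)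
        linarith [this.1]
      rw [norm_div, norm_mul, bessel_norm_exp_aux M t ht' a' x]
      have hden : ‖(2*(t:ℂ))‖ = 2*t := by
        rw [norm_mul, Complex.norm_two, Complex.norm_real, Real.norm_eq_abs, abs_of_pos ht']
      have hc : ‖(-((M:ℂ)/(2*(t:ℂ))))‖ = M/(2*t) := by
        rw [norm_neg, norm_div, hden, Complex.norm_real, Real.norm_eq_abs, abs_of_pos hM]
      rw [hden, hc]
      have hexp : Real.exp (-(t/2*M*a'.re) - M/(2*t)*x.re)
          ≤ Real.exp (-((M*a'.re/2) * t) - (M*b.re/4) / t) := by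
        apply Real.exp_le_exp.2
        have h1 : M*b.re/4/t ≤ M/(2*t)*x.re := by
          rw [div_le_iff₀ ht']
          calc M*b.re/4 ≤ M/2 * x.re := by
                have := mul_le_mul_of_nonneg_left hxre (le_of_lt (by positivity : (0:ℝ) < M/2))
                linarith
            _ = M/(2*t)*x.re*t := by field_simp
        have h2 : (M*a'.re/2) * t = t/2*M*a'.re := by ring
        linarith [h1, h2.le, h2.ge]
      calc Real.exp (-(t/2*M*a'.re) - M/(2*t)*x.re) * (M/(2*t)) / (2*t)
          ≤ Real.exp (-((M*a'.re/2) * t) - (M*b.re/4) / t) * (M/(2*t)) / (2*t) := by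
            apply div_le_div_of_nonneg_right ?_ (by positivity)
            exact mul_le_mul_of_nonneg_right hexp (by positivity)
        _ = M/4 * (Real.exp (-((M*a'.re/2) * t) - (M*b.re/4) / t) / t^2) := by
            field_simp; ring
    · exact (bessel_integrable_dom (M*a'.re/2) (M*b.re/4)
        (by positivity) (by positivity) 2).const_mul (M/4)
    · -- differentiability in the parameter
      filter_upwards [ae_restrict_mem measurableSet_Ioi] with t ht
      intro x hx
      have h1 : HasDerivAt (fun y : ℂ => -((t:ℂ)/2) * M * a' - ((M:ℂ)/(2*(t:ℂ))) * y)
          (-((M:ℂ)/(2*(t:ℂ)))) x := by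
        simpa using ((hasDerivAt_id x).const_mul ((M:ℂ)/(2*(t:ℂ)))).const_sub
          (-((t:ℂ)/2) * M * a')
      exact (h1.cexp).div_const _
  -- the outer derivative agrees with deriv G near a
  have hopen : {z : ℂ | 0 < z.re} ∈ nhds a :=
    (isOpen_lt continuous_const Complex.continuous_re).mem_nhds ha
  have hGeq : (fun a' => deriv (fun b' => F a' b') b) =ᶠ[nhds a] G := by
    filter_upwards [hopen] with a' ha' using (key1 a' ha').deriv
  -- derivative of G at a
  have key2 : HasDerivAt G (∫ t in Set.Ioi (0:ℝ),
      Complex.exp (-((t:ℂ)/2) * M * a - ((M:ℂ)/(2*(t:ℂ))) * b) * (-((t:ℂ)/2) * M) *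
        (-((M:ℂ)/(2*(t:ℂ)))) / (2*(t:ℂ))) a := by
    have := hasDerivAt_integral_of_dominated_loc_of_deriv_le
      (μ := volume.restrict (Set.Ioi (0:ℝ))) (x₀ := a)
      (F := fun a' t => Complex.exp (-((t:ℂ)/2) * M * a' - ((M:ℂ)/(2*(t:ℂ))) * b) *
        (-((M:ℂ)/(2*(t:ℂ)))) / (2*(t:ℂ)))
      (F' := fun a' t => Complex.exp (-((t:ℂ)/2) * M * a' - ((M:ℂ)/(2*(t:ℂ))) * b) *
        (-((t:ℂ)/2) * M) * (-((M:ℂ)/(2*(t:ℂ)))) / (2*(t:ℂ)))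
      (bound := fun t => M^2/8 * (Real.exp (-((M*a.re/4) * t) - (M*b.re/2) / t) / t^1))
      (Metric.ball_mem_nhds a (show (0:ℝ) < a.re/2 by linarith))
      ?_ ?_ ?_ ?_ ?_ ?_
    · exact this.2
    · exact Filter.Eventually.of_forall fun a'' =>
        (((bessel_contOn_exp M a'' b).mul
          ((continuousOn_const.div bessel_den_contOn bessel_den_ne).neg)).div
            bessel_den_contOn bessel_den_ne).aestronglyMeasurable measurableSet_Ioi
    · apply Integrable.mono ((bessel_integrable_dom (M*a.re/2) (M*b.re/2)
        (by positivity) (by positivity) 2).const_mul (M/4))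
        ((((bessel_contOn_exp M a b).mul
          ((continuousOn_const.div bessel_den_contOn bessel_den_ne).neg)).div
            bessel_den_contOn bessel_den_ne).aestronglyMeasurable measurableSet_Ioi)
      filter_upwards [ae_restrict_mem measurableSet_Ioi] with t ht
      have ht' : (0:ℝ) < t := ht
      simp only [Pi.div_apply, Pi.mul_apply, Pi.neg_apply]
      rw [norm_div, norm_mul, bessel_norm_exp_aux M t ht' a b]
      have hden : ‖(2*(t:ℂ))‖ = 2*t := by
        rw [norm_mul, Complex.norm_two, Complex.norm_real, Real.norm_eq_abs, abs_of_pos ht']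
      have hc : ‖(-((M:ℂ)/(2*(t:ℂ))))‖ = M/(2*t) := by
        rw [norm_neg, norm_div, hden, Complex.norm_real, Real.norm_eq_abs, abs_of_pos hM]
      rw [hden, hc, Real.norm_eq_abs, _root_.abs_of_nonneg (by positivity)]
      have heq : -(t/2*M*a.re) - M/(2*t)*b.re = -(M*a.re/2*t) - M*b.re/2/t := by ring
      rw [heq]
      rw [div_le_iff₀ (by positivity)]
      have : Real.exp (-(M*a.re/2*t) - M*b.re/2/t) * (M/(2*t))
          = M/4 * (Real.exp (-(M*a.re/2*t) - M*b.re/2/t) / t^2) * (2*t) := by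
        field_simp; ring
      rw [this]
    · exact ((((bessel_contOn_exp M a b).mul
        (((Complex.continuous_ofReal.div_const 2).neg.mul continuous_const).continuousOn)).mul
          ((continuousOn_const.div bessel_den_contOn bessel_den_ne).neg)).div
            bessel_den_contOn bessel_den_ne).aestronglyMeasurable measurableSet_Ioi
    · filter_upwards [ae_restrict_mem measurableSet_Ioi] with t ht
      intro x hx
      have ht' : (0:ℝ) < t := ht
      have hxre : a.re/2 ≤ x.re := by
        have h1 : |x.re - a.re| ≤ ‖x - a‖ := by
          simpa using Complex.abs_re_le_norm (x - a)
        have h2 : ‖x - a‖ < a.re/2 := by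
          simpa [Complex.dist_eq] using (Metric.mem_ball.mp hx)
        have := abs_lt.mp (lt_of_le_of_lt h1 h2)
        linarith [this.1]
      rw [norm_div, norm_mul, norm_mul, bessel_norm_exp_aux M t ht' x b]
      have hden : ‖(2*(t:ℂ))‖ = 2*t := by
        rw [norm_mul, Complex.norm_two, Complex.norm_real, Real.norm_eq_abs, abs_of_pos ht']
      have hc : ‖(-((M:ℂ)/(2*(t:ℂ))))‖ = M/(2*t) := by
        rw [norm_neg, norm_div, hden, Complex.norm_real, Real.norm_eq_abs, abs_of_pos hM]
      have hc2 : ‖(-((t:ℂ)/2) * (M:ℂ))‖ = t/2*M := by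
        rw [norm_mul, norm_neg, norm_div, Complex.norm_real, Complex.norm_real, Complex.norm_two,
          Real.norm_eq_abs, Real.norm_eq_abs, abs_of_pos ht', abs_of_pos hM]
      rw [hden, hc, hc2]
      have hexp : Real.exp (-(t/2*M*x.re) - M/(2*t)*b.re)
          ≤ Real.exp (-((M*a.re/4) * t) - (M*b.re/2) / t) := by
        apply Real.exp_le_exp.2
        have h1 : (M*a.re/4) * t ≤ t/2*M*x.re := by
          calc (M*a.re/4) * t = t/2*M*(a.re/2) := by ring
            _ ≤ t/2*M*x.re :=
                mul_le_mul_of_nonneg_left hxre (by positivity)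
        have h2 : (M*b.re/2)/t = M/(2*t)*b.re := by field_simp
        linarith [h1, h2.le, h2.ge]
      calc Real.exp (-(t/2*M*x.re) - M/(2*t)*b.re) * (t/2*M) * (M/(2*t)) / (2*t)
          ≤ Real.exp (-((M*a.re/4) * t) - (M*b.re/2) / t) * (t/2*M) * (M/(2*t)) / (2*t) := by
            apply div_le_div_of_nonneg_right ?_ (by positivity)
            apply mul_le_mul_of_nonneg_right ?_ (by positivity)
            exact mul_le_mul_of_nonneg_right hexp (by positivity)
        _ = M^2/8 * (Real.exp (-((M*a.re/4) * t) - (M*b.re/2) / t) / t^1) := by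
            rw [pow_one]; field_simp; try ring
    · exact (bessel_integrable_dom (M*a.re/4) (M*b.re/2)
        (by positivity) (by positivity) 1).const_mul (M^2/8)
    · filter_upwards [ae_restrict_mem measurableSet_Ioi] with t ht
      intro x hx
      have h1 : HasDerivAt (fun y : ℂ => -((t:ℂ)/2) * M * y - ((M:ℂ)/(2*(t:ℂ))) * b)
          (-((t:ℂ)/2) * M) x := by
        simpa using (((hasDerivAt_id x).const_mul (-((t:ℂ)/2) * (M:ℂ))).sub_const
          (((M:ℂ)/(2*(t:ℂ))) * b))
      exact ((h1.cexp).mul_const (-((M:ℂ)/(2*(t:ℂ))))).div_const _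
  -- assemble
  have hderiv : deriv (fun a' => deriv (fun b' => F a' b') b) a
      = ∫ t in Set.Ioi (0:ℝ),
        Complex.exp (-((t:ℂ)/2) * M * a - ((M:ℂ)/(2*(t:ℂ))) * b) * (-((t:ℂ)/2) * M) *
          (-((M:ℂ)/(2*(t:ℂ)))) / (2*(t:ℂ)) := by
    rw [hGeq.deriv_eq]
    exact key2.deriv
  have hint : (∫ t in Set.Ioi (0:ℝ),
      Complex.exp (-((t:ℂ)/2) * M * a - ((M:ℂ)/(2*(t:ℂ))) * b) * (-((t:ℂ)/2) * M) *
        (-((M:ℂ)/(2*(t:ℂ)))) / (2*(t:ℂ)))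
      = ((M:ℂ)^2/4) * F a b := by
    rw [hF a b, ← integral_const_mul]
    apply setIntegral_congr_fun measurableSet_Ioi
    intro t ht
    have ht' : (t:ℂ) ≠ 0 := Complex.ofReal_ne_zero.2 (ne_of_gt ht)
    field_simp
    ring
  rw [hderiv, hint]
  push_cast
  ring
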